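/- Let G be a nonempty class of finite simple graphs closed under taking induced subgraphs and closed under blow-ups (replacing a vertex by an independent set of clones), containing graphs of every order ≥ κ, and let λ(n, G) be defined as the maximum over G ∈ G of order n of the average of γ(G[X]) over κ-subsets X. Then there is a constant c (depending on κ and γ) such that for all κ ≤ q ≤ n we have λ(q, G) − λ(n, G) ≤ c/q. -/

import Mathlib

open Finset

/-- Any two embeddings of `Fin κ` into `Fin N` differ by a permutation of `Fin N`. -/
private lemma exists_perm_comp {κ N : ℕ} (j j' : Fin κ ↪ Fin N) :
    ∃ σ : Equiv.Perm (Fin N), ∀ i, σ (j i) = j' i := by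
  classical
  have hcompl : Fintype.card ↥(Set.range ⇑j)ᶜ = Fintype.card ↥(Set.range ⇑j')ᶜ := by
    rw [Fintype.card_compl_set, Fintype.card_compl_set,
      Set.card_range_of_injective j.injective, Set.card_range_of_injective j'.injective]
  let e₀ : ↥(Set.range ⇑j) ≃ ↥(Set.range ⇑j') :=
    (Equiv.ofInjective _ j.injective).symm.trans (Equiv.ofInjective _ j'.injective)
  obtain ⟨σ, hσ⟩ := (Equiv.Set.compl e₀).symm (Fintype.equivOfCardEq hcompl)
  refine ⟨σ, fun i => ?_⟩
  have h1 := hσ ⟨j i, ⟨i, rfl⟩⟩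
  have h2 : ((e₀ ⟨j i, ⟨i, rfl⟩⟩ : ↥(Set.range ⇑j')) : Fin N) = j' i := by
    simp [e₀, Equiv.ofInjective_apply, Equiv.ofInjective_symm_apply]
  exact h1.trans h2

/-- Fibers of the restriction map `(Fin n ↪ Fin N) → (Fin κ ↪ Fin N)` all have the same size. -/
private lemma fiber_card_eq {κ n N : ℕ} (e : Fin κ ↪ Fin n) (j j' : Fin κ ↪ Fin N) :
    (univ.filter fun h : Fin n ↪ Fin N => e.trans h = j).card
      = (univ.filter fun h : Fin n ↪ Fin N => e.trans h = j').card := by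
  classical
  obtain ⟨σ, hσ⟩ := exists_perm_comp j j'
  refine Finset.card_bij' (fun h _ => h.trans σ.toEmbedding)
    (fun h _ => h.trans σ.symm.toEmbedding) ?_ ?_ ?_ ?_
  · intro h hh
    simp only [mem_filter, mem_univ, true_and] at hh ⊢
    refine Function.Embedding.ext fun i => ?_
    have hhi : h (e i) = j i := DFunLike.congr_fun hh i
    show σ (h (e i)) = j' i
    rw [hhi, hσ i]
  · intro h hh
    simp only [mem_filter, mem_univ, true_and] at hh ⊢
    refine Function.Embedding.ext fun i => ?_
    have hhi : h (e i) = j' i := DFunLike.congr_fun hh i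
    show σ.symm (h (e i)) = j i
    rw [hhi, ← hσ i, Equiv.symm_apply_apply]
  · intro h _
    refine Function.Embedding.ext fun x => ?_
    show σ.symm (σ (h x)) = h x
    simp
  · intro h _
    refine Function.Embedding.ext fun x => ?_
    show σ (σ.symm (h x)) = h x
    simp

/-- Key identity: summing a function of the restriction over all big embeddings
is proportional to summing over the small embeddings. -/
private lemma sum_trans_eq {κ n N : ℕ} (e : Fin κ ↪ Fin n) (F : (Fin κ ↪ Fin N) → ℝ) :
    (Fintype.card (Fin κ ↪ Fin N) : ℝ) * ∑ h : Fin n ↪ Fin N, F (e.trans h)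
      = (Fintype.card (Fin n ↪ Fin N) : ℝ) * ∑ j : Fin κ ↪ Fin N, F j := by
  classical
  have hfib : ∀ j : Fin κ ↪ Fin N,
      Fintype.card (Fin κ ↪ Fin N)
          * (univ.filter fun h : Fin n ↪ Fin N => e.trans h = j).card
        = Fintype.card (Fin n ↪ Fin N) := by
    intro j
    have h2 : ∑ j' : Fin κ ↪ Fin N,
        (univ.filter fun h : Fin n ↪ Fin N => e.trans h = j').card
        = Fintype.card (Fin n ↪ Fin N) := by
      rw [← Finset.card_univ]
      exact (Finset.card_eq_sum_card_fiberwise fun h _ => Finset.mem_univ (e.trans h)).symm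
    calc Fintype.card (Fin κ ↪ Fin N)
          * (univ.filter fun h : Fin n ↪ Fin N => e.trans h = j).card
        = ∑ _j' : Fin κ ↪ Fin N,
            (univ.filter fun h : Fin n ↪ Fin N => e.trans h = j).card := by
          rw [Finset.sum_const, Finset.card_univ, smul_eq_mul]
      _ = ∑ j' : Fin κ ↪ Fin N,
            (univ.filter fun h : Fin n ↪ Fin N => e.trans h = j').card :=
          Finset.sum_congr rfl fun j' _ => fiber_card_eq e j j'
      _ = Fintype.card (Fin n ↪ Fin N) := h2
  have h1 : ∑ h : Fin n ↪ Fin N, F (e.trans h)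
      = ∑ j : Fin κ ↪ Fin N,
          ((univ.filter fun h : Fin n ↪ Fin N => e.trans h = j).card : ℝ) * F j := by
    rw [← Finset.sum_fiberwise_of_maps_to (fun h _ => Finset.mem_univ (e.trans h))
      (fun h => F (e.trans h))]
    refine Finset.sum_congr rfl fun j _ => ?_
    rw [Finset.sum_congr rfl (fun h hh => by rw [(Finset.mem_filter.1 hh).2] :
      ∀ h ∈ univ.filter fun h : Fin n ↪ Fin N => e.trans h = j,
        F (e.trans h) = F j), Finset.sum_const, nsmul_eq_mul]
  rw [h1, Finset.mul_sum, Finset.mul_sum]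
  refine Finset.sum_congr rfl fun j _ => ?_
  have h3 := hfib j
  have h4 : (Fintype.card (Fin κ ↪ Fin N) : ℝ)
      * ((univ.filter fun h : Fin n ↪ Fin N => e.trans h = j).card : ℝ)
      = (Fintype.card (Fin n ↪ Fin N) : ℝ) := by exact_mod_cast congrArg (Nat.cast : ℕ → ℝ) h3
  calc (Fintype.card (Fin κ ↪ Fin N) : ℝ)
        * (((univ.filter fun h : Fin n ↪ Fin N => e.trans h = j).card : ℝ) * F j)
      = ((Fintype.card (Fin κ ↪ Fin N) : ℝ)
          * ((univ.filter fun h : Fin n ↪ Fin N => e.trans h = j).card : ℝ)) * F j := by ring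
    _ = (Fintype.card (Fin n ↪ Fin N) : ℝ) * F j := by rw [h4]

/-- The balanced blow-up quotient map `Fin (a*q) → Fin q`. -/
private def qdiv (a q : ℕ) (x : Fin (a * q)) : Fin q :=
  ⟨x.1 / a, Nat.div_lt_of_lt_mul x.2⟩

/-- Fibers of composition with the quotient map over injective targets have size `a ^ κ`. -/
private lemma blow_fiber_card {κ q a : ℕ} (ha : 0 < a) (p : Fin κ → Fin q)
    (hp : Function.Injective p) :
    (univ.filter fun g : Fin κ ↪ Fin (a * q) => qdiv a q ∘ ⇑g = p).card = a ^ κ := by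
  classical
  have hcard : a ^ κ = Fintype.card (Fin κ → Fin a) := by
    rw [Fintype.card_fun, Fintype.card_fin, Fintype.card_fin]
  rw [hcard, ← Finset.card_univ]
  have hbnd : ∀ (i : Fin κ) (t : Fin κ → Fin a), a * (p i).1 + (t i).1 < a * q := by
    intro i t
    calc a * (p i).1 + (t i).1 < a * (p i).1 + a := Nat.add_lt_add_left (t i).2 _
      _ = a * ((p i).1 + 1) := (Nat.mul_succ a _).symm
      _ ≤ a * q := Nat.mul_le_mul_left a (p i).2
  have hdiv : ∀ (b c : ℕ), c < a → (a * b + c) / a = b := by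
    intro b c hc
    rw [Nat.mul_add_div ha, Nat.div_eq_of_lt hc, Nat.add_zero]
  refine Finset.card_bij'
    (fun g _ => fun i => (⟨(g i).1 % a, Nat.mod_lt _ ha⟩ : Fin a))
    (fun t _ => (⟨fun i => ⟨a * (p i).1 + (t i).1, hbnd i t⟩, ?_⟩ : Fin κ ↪ Fin (a * q)))
    ?_ ?_ ?_ ?_
  · -- injectivity of the constructed map
    intro i i' hii
    have hv : a * (p i).1 + (t i).1 = a * (p i').1 + (t i').1 := congrArg Fin.val hii
    have hpi : (p i).1 = (p i').1 := by
      have := congrArg (· / a) hv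
      simpa [hdiv _ _ (t i).2, hdiv _ _ (t i').2] using this
    exact hp (Fin.ext hpi)
  · intro g _
    exact Finset.mem_univ _
  · intro t _
    simp only [mem_filter, mem_univ, true_and]
    funext i
    exact Fin.ext (hdiv _ _ (t i).2)
  · -- left inverse
    intro g hg
    simp only [mem_filter, mem_univ, true_and] at hg
    refine Function.Embedding.ext fun i => ?_
    refine Fin.ext ?_
    show a * (p i).1 + (g i).1 % a = (g i).1
    have hgi : (g i).1 / a = (p i).1 := congrArg Fin.val (congrFun hg i)
    rw [← hgi]
    exact Nat.div_add_mod _ _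
  · -- right inverse
    intro t _
    funext i
    refine Fin.ext ?_
    show (a * (p i).1 + (t i).1) % a = (t i).1
    rw [Nat.mul_add_mod, Nat.mod_eq_of_lt (t i).2]

/-- Product lower bound: `(1 - ∑ (Aₜ - Bₜ)/Aₜ) ∏ Aₜ ≤ ∏ Bₜ`. -/
private lemma one_sub_sum_mul_prod_le (s : Finset ℕ) (A B : ℕ → ℝ)
    (hA : ∀ t ∈ s, 0 < A t) (hB0 : ∀ t ∈ s, 0 ≤ B t) (hBA : ∀ t ∈ s, B t ≤ A t) :
    (1 - ∑ t ∈ s, (A t - B t) / A t) * ∏ t ∈ s, A t ≤ ∏ t ∈ s, B t := by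
  classical
  induction s using Finset.induction_on with
  | empty => simp
  | @insert a s has ih =>
    have hAa := hA a (Finset.mem_insert_self a s)
    have hBa := hB0 a (Finset.mem_insert_self a s)
    have hBAa := hBA a (Finset.mem_insert_self a s)
    have hA' : ∀ t ∈ s, 0 < A t := fun t ht => hA t (Finset.mem_insert_of_mem ht)
    have hB0' : ∀ t ∈ s, 0 ≤ B t := fun t ht => hB0 t (Finset.mem_insert_of_mem ht)
    have hBA' : ∀ t ∈ s, B t ≤ A t := fun t ht => hBA t (Finset.mem_insert_of_mem ht)
    have hIH := ih hA' hB0' hBA'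
    rw [Finset.sum_insert has, Finset.prod_insert has, Finset.prod_insert has]
    set δ : ℝ := (A a - B a) / A a with hδ
    set ε : ℝ := ∑ t ∈ s, (A t - B t) / A t with hε
    have hδ0 : 0 ≤ δ := div_nonneg (by linarith) hAa.le
    have hε0 : 0 ≤ ε :=
      Finset.sum_nonneg fun t ht => div_nonneg (by linarith [hBA' t ht]) (hA' t ht).le
    have hPA : (0:ℝ) ≤ ∏ t ∈ s, A t := Finset.prod_nonneg fun t ht => (hA' t ht).le
    have hPB : (0:ℝ) ≤ ∏ t ∈ s, B t := Finset.prod_nonneg hB0'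
    have hBeq : B a = (1 - δ) * A a := by
      rw [hδ, sub_mul, div_mul_cancel₀ _ hAa.ne']; ring
    rcases le_or_gt (1 - (δ + ε)) 0 with hneg | hpos
    · calc (1 - (δ + ε)) * (A a * ∏ t ∈ s, A t)
          ≤ 0 := mul_nonpos_of_nonpos_of_nonneg hneg (mul_nonneg hAa.le hPA)
        _ ≤ B a * ∏ t ∈ s, B t := mul_nonneg hBa hPB
    · calc (1 - (δ + ε)) * (A a * ∏ t ∈ s, A t)
          ≤ ((1 - δ) * (1 - ε)) * (A a * ∏ t ∈ s, A t) := by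
            have hkey : (1 - (δ + ε)) ≤ (1 - δ) * (1 - ε) := by nlinarith [mul_nonneg hδ0 hε0]
            exact mul_le_mul_of_nonneg_right hkey (mul_nonneg hAa.le hPA)
        _ = ((1 - δ) * A a) * ((1 - ε) * ∏ t ∈ s, A t) := by ring
        _ ≤ ((1 - δ) * A a) * ∏ t ∈ s, B t := by
            refine mul_le_mul_of_nonneg_left hIH ?_
            have hδ1 : δ ≤ 1 := by nlinarith
            exact mul_nonneg (by linarith) hAa.le
        _ = B a * ∏ t ∈ s, B t := by rw [← hBeq]

set_option maxHeartbeats 3200000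

theorem stmt_5 (κ : ℕ) (hκ : 1 ≤ κ)
    (𝒢 : ∀ n : ℕ, Set (SimpleGraph (Fin n)))
    (hclosed : ∀ m n : ℕ, ∀ G ∈ 𝒢 n, ∀ f : Fin m ↪ Fin n, G.comap ⇑f ∈ 𝒢 m)
    (hblow : ∀ m n : ℕ, ∀ G ∈ 𝒢 n, ∀ f : Fin m → Fin n, G.comap f ∈ 𝒢 m)
    (hne : ∀ n : ℕ, κ ≤ n → (𝒢 n).Nonempty)
    (γ : SimpleGraph (Fin κ) → ℝ)
    (hγ : ∀ H₁ H₂ : SimpleGraph (Fin κ), Nonempty (H₁ ≃g H₂) → γ H₁ = γ H₂)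
    (lam : ∀ n : ℕ, SimpleGraph (Fin n) → ℝ)
    (hlam : ∀ (n : ℕ) (G : SimpleGraph (Fin n)),
      lam n G = (∑ f : Fin κ ↪ Fin n, γ (G.comap ⇑f)) / (Fintype.card (Fin κ ↪ Fin n))) :
    ∃ c : ℝ, ∀ q n : ℕ, κ ≤ q → q ≤ n →
      ∀ Lq Ln : ℝ, IsGreatest (lam q '' 𝒢 q) Lq → IsGreatest (lam n '' 𝒢 n) Ln →
        Lq - Ln ≤ c / q := by
  classical
  have hmul : ∀ (x d : ℝ), d ≠ 0 → d * (x / d) = x := fun x d hd => by field_simp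
  -- a uniform bound on |γ|
  obtain ⟨M₀, hM₀⟩ := Finite.exists_le fun H : SimpleGraph (Fin κ) => |γ H|
  set M : ℝ := max M₀ 0 with hMdef
  have hM0 : 0 ≤ M := le_max_right _ _
  have hM : ∀ H : SimpleGraph (Fin κ), |γ H| ≤ M :=
    fun H => (hM₀ H).trans (le_max_left _ _)
  -- cardinalities of embedding spaces are positive
  have hcardpos : ∀ m : ℕ, κ ≤ m → 0 < Fintype.card (Fin κ ↪ Fin m) := by
    intro m hm
    exact Fintype.card_pos_iff.mpr ⟨Fin.castLEEmb hm⟩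
  -- |lam m G| ≤ M
  have habs : ∀ m : ℕ, κ ≤ m → ∀ G : SimpleGraph (Fin m), |lam m G| ≤ M := by
    intro m hm G
    have hpos : (0:ℝ) < Fintype.card (Fin κ ↪ Fin m) := by exact_mod_cast hcardpos m hm
    rw [hlam, abs_div, Nat.abs_cast, div_le_iff₀ hpos]
    calc |∑ f : Fin κ ↪ Fin m, γ (G.comap ⇑f)|
        ≤ ∑ f : Fin κ ↪ Fin m, |γ (G.comap ⇑f)| := Finset.abs_sum_le_sum_abs _ _
      _ ≤ ∑ _f : Fin κ ↪ Fin m, M := Finset.sum_le_sum fun f _ => hM _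
      _ = M * Fintype.card (Fin κ ↪ Fin m) := by
          rw [Finset.sum_const, Finset.card_univ, nsmul_eq_mul, mul_comm]
  refine ⟨4 * M * κ ^ 2, ?_⟩
  intro q n hκq hqn Lq Ln hLq hLn
  have hκn : κ ≤ n := hκq.trans hqn
  obtain ⟨Gq0, hGq0, hGq0lam⟩ := hLq.1
  obtain ⟨Gn0, hGn0, hGn0lam⟩ := hLn.1
  have hLqM : |Lq| ≤ M := hGq0lam ▸ habs q hκq Gq0
  have hLnM : |Ln| ≤ M := hGn0lam ▸ habs n hκn Gn0
  have hq0 : 0 < q := hκ.trans hκq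
  have hq0' : (0:ℝ) < q := by exact_mod_cast hq0
  by_cases hq2 : q < 2 * κ
  · -- trivial case: q small
    rw [le_div_iff₀ hq0']
    have h1 : Lq - Ln ≤ 2 * M := by
      have ha := abs_le.1 hLqM
      have hb := abs_le.1 hLnM
      linarith [ha.2, hb.1]
    have h2 : (q:ℝ) ≤ 2 * (κ:ℝ) ^ 2 := by
      have hq2' : (q:ℝ) ≤ 2 * κ := by exact_mod_cast hq2.le
      have hκ1 : (1:ℝ) ≤ κ := by exact_mod_cast hκ
      nlinarith
    nlinarith [mul_nonneg (sub_nonneg.2 h1) hq0'.le, mul_nonneg hM0 (sub_nonneg.2 h2)]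
  · push_neg at hq2  -- 2 * κ ≤ q
    have hq2' : (2:ℝ) * κ ≤ q := by exact_mod_cast hq2
    have hκ1 : (1:ℝ) ≤ κ := by exact_mod_cast hκ
    -- choose the blow-up factor
    set a : ℕ := n / q + 1 with hadef
    have ha : 0 < a := Nat.succ_pos _
    have ha1 : (1:ℝ) ≤ a := by exact_mod_cast ha
    have hnN : n ≤ a * q := by
      rw [hadef]
      calc n = q * (n / q) + n % q := (Nat.div_add_mod n q).symm
        _ ≤ q * (n / q) + q := Nat.add_le_add_left (Nat.mod_lt _ hq0).le _
        _ = (n / q + 1) * q := by ring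
    have hκN : κ ≤ a * q := hκn.trans hnN
    have hqN : q ≤ a * q := le_trans hqn hnN
    -- the blow-up graph
    set G'' : SimpleGraph (Fin (a * q)) := Gq0.comap (qdiv a q) with hG''def
    have hG'' : G'' ∈ 𝒢 (a * q) := hblow (a * q) q Gq0 hGq0 (qdiv a q)
    -- notation for cardinalities
    set B : ℝ := (Fintype.card (Fin κ ↪ Fin (a * q)) : ℝ) with hBdef
    set Eq : ℝ := (Fintype.card (Fin κ ↪ Fin q) : ℝ) with hEqdef
    have hBpos : 0 < B := by rw [hBdef]; exact_mod_cast hcardpos (a * q) hκN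
    have hEqpos : 0 < Eq := by rw [hEqdef]; exact_mod_cast hcardpos q hκq
    -- Step B : lam (a*q) G'' ≤ Ln
    have hstepB : lam (a * q) G'' ≤ Ln := by
      have hEn : (0:ℝ) < Fintype.card (Fin κ ↪ Fin n) := by exact_mod_cast hcardpos n hκn
      have hHn : (0:ℝ) < Fintype.card (Fin n ↪ Fin (a * q)) := by
        exact_mod_cast Fintype.card_pos_iff.mpr ⟨Fin.castLEEmb hnN⟩
      have hsumJ : ∑ j : Fin κ ↪ Fin (a * q), γ (G''.comap ⇑j) = B * lam (a * q) G'' := by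
        rw [hlam (a * q) G'', ← hBdef]
        exact (hmul _ _ (ne_of_gt hBpos)).symm
      have hkey : ∀ e' : Fin κ ↪ Fin n,
          ∑ h : Fin n ↪ Fin (a * q), γ (G''.comap ⇑(e'.trans h))
            = (Fintype.card (Fin n ↪ Fin (a * q)) : ℝ) * lam (a * q) G'' := by
        intro e'
        have h5 := sum_trans_eq e' (fun j : Fin κ ↪ Fin (a * q) => γ (G''.comap ⇑j))
        rw [← hBdef] at h5
        rw [hsumJ] at h5
        apply mul_left_cancel₀ (ne_of_gt hBpos)
        rw [h5]
        ring
      have hpere : ∀ e' : Fin κ ↪ Fin n,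
          ∑ h : Fin n ↪ Fin (a * q), γ ((G''.comap ⇑h).comap ⇑e')
            = (Fintype.card (Fin n ↪ Fin (a * q)) : ℝ) * lam (a * q) G'' := by
        intro e'
        rw [← hkey e']
        exact Finset.sum_congr rfl fun h _ => rfl
      have hsum : (Fintype.card (Fin κ ↪ Fin n) : ℝ)
          * ((Fintype.card (Fin n ↪ Fin (a * q)) : ℝ) * lam (a * q) G'')
          = ∑ h : Fin n ↪ Fin (a * q), ∑ e' : Fin κ ↪ Fin n,
              γ ((G''.comap ⇑h).comap ⇑e') := by
        rw [Finset.sum_comm]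
        calc (Fintype.card (Fin κ ↪ Fin n) : ℝ)
            * ((Fintype.card (Fin n ↪ Fin (a * q)) : ℝ) * lam (a * q) G'')
            = ∑ _e' : Fin κ ↪ Fin n,
                (Fintype.card (Fin n ↪ Fin (a * q)) : ℝ) * lam (a * q) G'' := by
              rw [Finset.sum_const, Finset.card_univ, nsmul_eq_mul]
          _ = ∑ e' : Fin κ ↪ Fin n, ∑ h : Fin n ↪ Fin (a * q),
                γ ((G''.comap ⇑h).comap ⇑e') :=
              Finset.sum_congr rfl fun e' _ => (hpere e').symm
      have hbound : ∑ h : Fin n ↪ Fin (a * q), ∑ e' : Fin κ ↪ Fin n,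
            γ ((G''.comap ⇑h).comap ⇑e')
          ≤ (Fintype.card (Fin n ↪ Fin (a * q)) : ℝ)
            * ((Fintype.card (Fin κ ↪ Fin n) : ℝ) * Ln) := by
        calc ∑ h : Fin n ↪ Fin (a * q), ∑ e' : Fin κ ↪ Fin n, γ ((G''.comap ⇑h).comap ⇑e')
            ≤ ∑ _h : Fin n ↪ Fin (a * q), (Fintype.card (Fin κ ↪ Fin n) : ℝ) * Ln := by
              refine Finset.sum_le_sum fun h _ => ?_
              have hmem : G''.comap ⇑h ∈ 𝒢 n := hclosed n (a * q) G'' hG'' h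
              have hle : lam n (G''.comap ⇑h) ≤ Ln := hLn.2 ⟨G''.comap ⇑h, hmem, rfl⟩
              have hlamn : ∑ e' : Fin κ ↪ Fin n, γ ((G''.comap ⇑h).comap ⇑e')
                  = (Fintype.card (Fin κ ↪ Fin n) : ℝ) * lam n (G''.comap ⇑h) := by
                rw [hlam n (G''.comap ⇑h)]
                exact (hmul _ _ (ne_of_gt hEn)).symm
              rw [hlamn]
              exact mul_le_mul_of_nonneg_left hle hEn.le
          _ = (Fintype.card (Fin n ↪ Fin (a * q)) : ℝ)
              * ((Fintype.card (Fin κ ↪ Fin n) : ℝ) * Ln) := by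
              rw [Finset.sum_const, Finset.card_univ, nsmul_eq_mul]
      rw [← hsum] at hbound
      have hpos2 : (0:ℝ) < (Fintype.card (Fin κ ↪ Fin n) : ℝ)
          * (Fintype.card (Fin n ↪ Fin (a * q)) : ℝ) := mul_pos hEn hHn
      have hb2 : ((Fintype.card (Fin κ ↪ Fin n) : ℝ)
            * (Fintype.card (Fin n ↪ Fin (a * q)) : ℝ)) * lam (a * q) G''
          ≤ ((Fintype.card (Fin κ ↪ Fin n) : ℝ)
            * (Fintype.card (Fin n ↪ Fin (a * q)) : ℝ)) * Ln := by
        calc ((Fintype.card (Fin κ ↪ Fin n) : ℝ)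
              * (Fintype.card (Fin n ↪ Fin (a * q)) : ℝ)) * lam (a * q) G''
            = (Fintype.card (Fin κ ↪ Fin n) : ℝ)
              * ((Fintype.card (Fin n ↪ Fin (a * q)) : ℝ) * lam (a * q) G'') := by ring
          _ ≤ (Fintype.card (Fin n ↪ Fin (a * q)) : ℝ)
              * ((Fintype.card (Fin κ ↪ Fin n) : ℝ) * Ln) := hbound
          _ = ((Fintype.card (Fin κ ↪ Fin n) : ℝ)
              * (Fintype.card (Fin n ↪ Fin (a * q)) : ℝ)) * Ln := by ring
      exact le_of_mul_le_mul_left hb2 hpos2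
    -- Step A : Lq - 4 M κ²/q ≤ lam (a*q) G''
    have hsumq : ∑ j : Fin κ ↪ Fin q, γ (Gq0.comap ⇑j) = Eq * Lq := by
      rw [← hGq0lam, hlam q Gq0, ← hEqdef]
      exact (hmul _ _ (ne_of_gt hEqpos)).symm
    -- reindex: sum over injective functions = sum over embeddings
    have hreindex : ∀ F : (Fin κ → Fin q) → ℝ,
        ∑ p ∈ univ.filter (fun p : Fin κ → Fin q => Function.Injective p), F p
          = ∑ j : Fin κ ↪ Fin q, F ⇑j := by
      intro F
      refine (Finset.sum_bij (fun (j : Fin κ ↪ Fin q) _ => (⇑j : Fin κ → Fin q))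
        ?_ ?_ ?_ ?_).symm
      · intro j _
        exact Finset.mem_filter.2 ⟨Finset.mem_univ _, j.injective⟩
      · intro j₁ _ j₂ _ h
        exact Function.Embedding.coe_injective h
      · intro p hp
        exact ⟨⟨p, (Finset.mem_filter.1 hp).2⟩, Finset.mem_univ _, rfl⟩
      · intro j _
        rfl
    -- fiber decomposition of the big sum
    set c : (Fin κ → Fin q) → ℕ :=
      fun p => (univ.filter fun g : Fin κ ↪ Fin (a * q) => qdiv a q ∘ ⇑g = p).card with hcdef
    have hcval : ∀ p : Fin κ → Fin q, Function.Injective p → (c p : ℝ) = (a:ℝ) ^ κ := by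
      intro p hp
      rw [hcdef]
      simp only
      rw [blow_fiber_card ha p hp]
      push_cast
      ring
    have hS : ∑ g : Fin κ ↪ Fin (a * q), γ (G''.comap ⇑g)
        = ∑ p : Fin κ → Fin q, (c p : ℝ) * γ (Gq0.comap p) := by
      rw [← Finset.sum_fiberwise_of_maps_to
        (fun (g : Fin κ ↪ Fin (a * q)) _ => Finset.mem_univ (qdiv a q ∘ ⇑g))
        (fun g : Fin κ ↪ Fin (a * q) => γ (G''.comap ⇑g))]
      refine Finset.sum_congr rfl fun p _ => ?_
      have hval : ∀ g ∈ univ.filter fun g : Fin κ ↪ Fin (a * q) => qdiv a q ∘ ⇑g = p,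
          γ (G''.comap ⇑g) = γ (Gq0.comap p) := by
        intro g hg
        have hgp : qdiv a q ∘ ⇑g = p := (Finset.mem_filter.1 hg).2
        have hcc : G''.comap ⇑g = Gq0.comap p := by rw [← hgp]; rfl
        rw [hcc]
      rw [Finset.sum_congr rfl hval, Finset.sum_const, nsmul_eq_mul]
    -- split into injective / non-injective parts
    have hsplit := Finset.sum_filter_add_sum_filter_not univ
      (fun p : Fin κ → Fin q => Function.Injective p)
      (fun p : Fin κ → Fin q => (c p : ℝ) * γ (Gq0.comap p))
    have hgoodval : ∑ p ∈ univ.filter (fun p : Fin κ → Fin q => Function.Injective p),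
        (c p : ℝ) * γ (Gq0.comap p) = (a:ℝ) ^ κ * (Eq * Lq) := by
      calc ∑ p ∈ univ.filter (fun p : Fin κ → Fin q => Function.Injective p),
            (c p : ℝ) * γ (Gq0.comap p)
          = ∑ p ∈ univ.filter (fun p : Fin κ → Fin q => Function.Injective p),
            (a:ℝ) ^ κ * γ (Gq0.comap p) := by
            refine Finset.sum_congr rfl fun p hp => ?_
            rw [hcval p (Finset.mem_filter.1 hp).2]
        _ = (a:ℝ) ^ κ * ∑ p ∈ univ.filter (fun p : Fin κ → Fin q => Function.Injective p),
              γ (Gq0.comap p) := by rw [Finset.mul_sum]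
        _ = (a:ℝ) ^ κ * (Eq * Lq) := by
            rw [hreindex (fun p => γ (Gq0.comap p)), hsumq]
    -- counting: total and good counts
    have htotal : ∑ p : Fin κ → Fin q, (c p : ℝ) = B := by
      rw [hBdef]
      have hcnt : Fintype.card (Fin κ ↪ Fin (a * q)) = ∑ p : Fin κ → Fin q, c p := by
        rw [← Finset.card_univ]
        exact Finset.card_eq_sum_card_fiberwise
          fun (g : Fin κ ↪ Fin (a * q)) _ => Finset.mem_univ (qdiv a q ∘ ⇑g)
      rw [hcnt, Nat.cast_sum]
    have hgoodcnt : ∑ p ∈ univ.filter (fun p : Fin κ → Fin q => Function.Injective p),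
        (c p : ℝ) = (a:ℝ) ^ κ * Eq := by
      calc ∑ p ∈ univ.filter (fun p : Fin κ → Fin q => Function.Injective p), (c p : ℝ)
          = ∑ p ∈ univ.filter (fun p : Fin κ → Fin q => Function.Injective p), ((a:ℝ) ^ κ) :=
            Finset.sum_congr rfl fun p hp => hcval p (Finset.mem_filter.1 hp).2
        _ = (a:ℝ) ^ κ * Eq := by
            have h1 := hreindex (fun _ => (1:ℝ))
            simp only [Finset.sum_const, Finset.card_univ, nsmul_eq_mul, mul_one] at h1
            rw [Finset.sum_const, nsmul_eq_mul, h1, ← hEqdef]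
            ring
    have hbadcnt : ∑ p ∈ univ.filter (fun p : Fin κ → Fin q => ¬ Function.Injective p),
        (c p : ℝ) = B - (a:ℝ) ^ κ * Eq := by
      have h2 := Finset.sum_filter_add_sum_filter_not univ
        (fun p : Fin κ → Fin q => Function.Injective p) (fun p => (c p : ℝ))
      rw [hgoodcnt, htotal] at h2
      linarith
    have hbadlow : -(M * (B - (a:ℝ) ^ κ * Eq))
        ≤ ∑ p ∈ univ.filter (fun p : Fin κ → Fin q => ¬ Function.Injective p),
            (c p : ℝ) * γ (Gq0.comap p) := by
      calc -(M * (B - (a:ℝ) ^ κ * Eq))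
          = ∑ p ∈ univ.filter (fun p : Fin κ → Fin q => ¬ Function.Injective p),
              (c p : ℝ) * (-M) := by
            rw [← Finset.sum_mul, hbadcnt]; ring
        _ ≤ ∑ p ∈ univ.filter (fun p : Fin κ → Fin q => ¬ Function.Injective p),
              (c p : ℝ) * γ (Gq0.comap p) := by
            refine Finset.sum_le_sum fun p _ => ?_
            refine mul_le_mul_of_nonneg_left ?_ (Nat.cast_nonneg _)
            linarith [(abs_le.1 (hM (Gq0.comap p))).1]
    have hSlow : (a:ℝ) ^ κ * Eq * Lq - M * (B - (a:ℝ) ^ κ * Eq)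
        ≤ ∑ g : Fin κ ↪ Fin (a * q), γ (G''.comap ⇑g) := by
      rw [hS, ← hsplit, hgoodval]
      linarith [hbadlow]
    -- ratio bound : B - a^κ Eq ≤ (2 κ²/q) B
    have hBprod : B = ∏ t ∈ Finset.range κ, ((a:ℝ) * q - t) := by
      rw [hBdef, Fintype.card_embedding_eq, Fintype.card_fin, Fintype.card_fin,
        Nat.descFactorial_eq_prod_range, Nat.cast_prod]
      refine Finset.prod_congr rfl fun t ht => ?_
      have htk : t < κ := Finset.mem_range.1 ht
      have hle : t ≤ a * q := le_trans (le_of_lt (lt_of_lt_of_le htk hκq)) hqN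
      rw [Nat.cast_sub hle]
      push_cast
      ring
    have hGprod : (a:ℝ) ^ κ * Eq = ∏ t ∈ Finset.range κ, ((a:ℝ) * ((q:ℝ) - t)) := by
      rw [hEqdef, Fintype.card_embedding_eq, Fintype.card_fin, Fintype.card_fin,
        Nat.descFactorial_eq_prod_range, Nat.cast_prod, Finset.prod_mul_distrib,
        Finset.prod_const, Finset.card_range]
      congr 1
      refine Finset.prod_congr rfl fun t ht => ?_
      have htk : t < κ := Finset.mem_range.1 ht
      have hle : t ≤ q := le_of_lt (lt_of_lt_of_le htk hκq)
      rw [Nat.cast_sub hle]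
    have ha0 : (0:ℝ) ≤ a := by positivity
    have hκq' : (κ:ℝ) ≤ q := by exact_mod_cast hκq
    have hratio : B - (a:ℝ) ^ κ * Eq ≤ (2 * (κ:ℝ) ^ 2 / q) * B := by
      have hAp : ∀ t ∈ Finset.range κ, (0:ℝ) < (a:ℝ) * (q:ℝ) - (t:ℝ) := by
        intro t ht
        have htk : (t:ℝ) < κ := by exact_mod_cast Finset.mem_range.1 ht
        nlinarith
      have hBp : ∀ t ∈ Finset.range κ, (0:ℝ) ≤ (a:ℝ) * ((q:ℝ) - (t:ℝ)) := by
        intro t ht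
        have htk : (t:ℝ) < κ := by exact_mod_cast Finset.mem_range.1 ht
        nlinarith
      have hBA : ∀ t ∈ Finset.range κ, (a:ℝ) * ((q:ℝ) - (t:ℝ)) ≤ (a:ℝ) * (q:ℝ) - (t:ℝ) := by
        intro t ht
        have ht0 : (0:ℝ) ≤ t := Nat.cast_nonneg t
        nlinarith
      have hterm : ∀ t ∈ Finset.range κ,
          (((a:ℝ) * (q:ℝ) - (t:ℝ)) - (a:ℝ) * ((q:ℝ) - (t:ℝ))) / ((a:ℝ) * (q:ℝ) - (t:ℝ))
            ≤ 2 * (κ:ℝ) / q := by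
        intro t ht
        have htk : (t:ℝ) < κ := by exact_mod_cast Finset.mem_range.1 ht
        have hA := hAp t ht
        rw [div_le_div_iff₀ hA hq0']
        have ht0 : (0:ℝ) ≤ t := Nat.cast_nonneg t
        nlinarith [mul_nonneg (mul_nonneg ha0 hq0'.le) (sub_nonneg.2 htk.le),
          mul_nonneg ht0 (sub_nonneg.2 hq2'),
          mul_nonneg (mul_nonneg (le_trans (by norm_num) hκ1) ha0) hq0'.le]
      have hsumterm : ∑ t ∈ Finset.range κ,
          (((a:ℝ) * (q:ℝ) - (t:ℝ)) - (a:ℝ) * ((q:ℝ) - (t:ℝ))) / ((a:ℝ) * (q:ℝ) - (t:ℝ))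
            ≤ 2 * (κ:ℝ) ^ 2 / q := by
        calc ∑ t ∈ Finset.range κ,
            (((a:ℝ) * (q:ℝ) - (t:ℝ)) - (a:ℝ) * ((q:ℝ) - (t:ℝ))) / ((a:ℝ) * (q:ℝ) - (t:ℝ))
            ≤ ∑ _t ∈ Finset.range κ, 2 * (κ:ℝ) / q := Finset.sum_le_sum hterm
          _ = κ * (2 * (κ:ℝ) / q) := by rw [Finset.sum_const, Finset.card_range, nsmul_eq_mul]
          _ = 2 * (κ:ℝ) ^ 2 / q := by ring
      have hmain := one_sub_sum_mul_prod_le (Finset.range κ)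
        (fun t => (a:ℝ) * (q:ℝ) - (t:ℝ)) (fun t => (a:ℝ) * ((q:ℝ) - (t:ℝ))) hAp hBp hBA
      rw [← hBprod, ← hGprod] at hmain
      nlinarith [mul_le_mul_of_nonneg_right hsumterm hBpos.le]
    have hGB : (a:ℝ) ^ κ * Eq ≤ B := by
      have hbadnn : (0:ℝ) ≤ ∑ p ∈ univ.filter
          (fun p : Fin κ → Fin q => ¬ Function.Injective p), (c p : ℝ) :=
        Finset.sum_nonneg fun p _ => Nat.cast_nonneg _
      linarith [hbadcnt]
    -- conclude step A
    have hstepA : Lq - 4 * M * (κ:ℝ) ^ 2 / q ≤ lam (a * q) G'' := by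
      have hlamval : lam (a * q) G''
          = (∑ g : Fin κ ↪ Fin (a * q), γ (G''.comap ⇑g)) / B := by
        rw [hlam (a * q) G'', ← hBdef]
      rw [hlamval, le_div_iff₀ hBpos]
      have h1 : 0 ≤ B - (a:ℝ) ^ κ * Eq := by linarith
      have h2 : Lq + M ≤ 2 * M := by linarith [(abs_le.1 hLqM).2]
      have h3 : 0 ≤ Lq + M := by linarith [(abs_le.1 hLqM).1]
      have hkey : (B - (a:ℝ) ^ κ * Eq) * (Lq + M) ≤ ((2 * (κ:ℝ) ^ 2 / q) * B) * (2 * M) :=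
        mul_le_mul hratio h2 h3 (by positivity)
      have hexp : (Lq - 4 * M * (κ:ℝ) ^ 2 / q) * B
          = ((a:ℝ) ^ κ * Eq * Lq - M * (B - (a:ℝ) ^ κ * Eq))
            + ((B - (a:ℝ) ^ κ * Eq) * (Lq + M) - ((2 * (κ:ℝ) ^ 2 / q) * B) * (2 * M)) := by
        ring
      linarith [hSlow, hkey, hexp]
    -- combine
    linarith [hstepA, hstepB]
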